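/- Let X, Y₁, Y₂, Y₃ be random variables with values in finite sets such that Y₁, Y₂, Y₃ are mutually independent. Then the conditional mutual information satisfies I(Y₁ ; Y₂ | X, Y₃) ≤ I( (Y₁, Y₂, Y₃) ; X ). -/

import Mathlib

/-- The probability that the finitely-valued random variable `X` (on the finite
probability space with mass function `P`) takes the value `a`. -/
noncomputable def rvDist {Ω α : Type*} [Fintype Ω] [DecidableEq α]
    (P : Ω → ℝ) (X : Ω → α) (a : α) : ℝ :=
  ∑ ω : Ω, if X ω = a then P ω else 0

/-- Shannon entropy of a finitely-valued random variable (in nats, with the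
convention `0 log 0 = 0`, which holds since `Real.log 0 = 0`). -/
noncomputable def rvEntropy {Ω α : Type*} [Fintype Ω] [Fintype α] [DecidableEq α]
    (P : Ω → ℝ) (X : Ω → α) : ℝ :=
  -∑ a : α, rvDist P X a * Real.log (rvDist P X a)

/-- Conditional Shannon entropy `H(X | Y) = H(X, Y) - H(Y)`. -/
noncomputable def rvCondEntropy {Ω α β : Type*} [Fintype Ω] [Fintype α] [Fintype β]
    [DecidableEq α] [DecidableEq β] (P : Ω → ℝ) (X : Ω → α) (Y : Ω → β) : ℝ :=
  rvEntropy P (fun ω => (X ω, Y ω)) - rvEntropy P Y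

/-- Mutual information `I(X ; Y) = H(X) + H(Y) - H(X, Y)`. -/
noncomputable def rvMutualInfo {Ω α β : Type*} [Fintype Ω] [Fintype α] [Fintype β]
    [DecidableEq α] [DecidableEq β] (P : Ω → ℝ) (X : Ω → α) (Y : Ω → β) : ℝ :=
  rvEntropy P X + rvEntropy P Y - rvEntropy P (fun ω => (X ω, Y ω))

/-- Conditional mutual information `I(X ; Y | Z) = H(X|Z) + H(Y|Z) - H(X,Y|Z)`. -/
noncomputable def rvCondMutualInfo {Ω α β γ : Type*} [Fintype Ω] [Fintype α]
    [Fintype β] [Fintype γ] [DecidableEq α] [DecidableEq β] [DecidableEq γ]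
    (P : Ω → ℝ) (X : Ω → α) (Y : Ω → β) (Z : Ω → γ) : ℝ :=
  rvCondEntropy P X Z + rvCondEntropy P Y Z
    - rvCondEntropy P (fun ω => (X ω, Y ω)) Z

lemma rvDist_nonneg {Ω α : Type*} [Fintype Ω] [DecidableEq α]
    (P : Ω → ℝ) (hP : ∀ ω, 0 ≤ P ω) (X : Ω → α) (a : α) : 0 ≤ rvDist P X a := by
  apply Finset.sum_nonneg
  intro ω _
  split
  · exact hP ω
  · exact le_refl 0

lemma le_rvDist {Ω α : Type*} [Fintype Ω] [DecidableEq α]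
    (P : Ω → ℝ) (hP : ∀ ω, 0 ≤ P ω) (X : Ω → α) (ω0 : Ω) :
    P ω0 ≤ rvDist P X (X ω0) := by
  have := Finset.single_le_sum (f := fun ω => if X ω = X ω0 then P ω else 0)
    (fun ω _ => by split
                   · exact hP ω
                   · exact le_refl 0) (Finset.mem_univ ω0)
  simpa [rvDist] using this

lemma sum_weighted {Ω α : Type*} [Fintype Ω] [Fintype α] [DecidableEq α]
    (P : Ω → ℝ) (X : Ω → α) (h : α → ℝ) :
    ∑ ω : Ω, P ω * h (X ω) = ∑ a : α, rvDist P X a * h a := by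
  unfold rvDist
  simp only [Finset.sum_mul]
  rw [Finset.sum_comm]
  congr 1; funext ω
  have : ∀ a : α, (if X ω = a then P ω else 0) * h a
      = (if X ω = a then P ω * h (X ω) else 0) := by
    intro a; split <;> simp_all
  simp only [this]
  rw [Finset.sum_ite_eq]
  simp

lemma rvDist_sum_one {Ω α : Type*} [Fintype Ω] [Fintype α] [DecidableEq α]
    (P : Ω → ℝ) (hP1 : ∑ ω : Ω, P ω = 1) (X : Ω → α) :
    ∑ a : α, rvDist P X a = 1 := by
  have := sum_weighted P X (fun _ => (1:ℝ))
  simp only [mul_one] at this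
  rw [← this, hP1]

lemma rvEntropy_eq {Ω α : Type*} [Fintype Ω] [Fintype α] [DecidableEq α]
    (P : Ω → ℝ) (X : Ω → α) :
    rvEntropy P X = -∑ ω : Ω, P ω * Real.log (rvDist P X (X ω)) := by
  rw [rvEntropy, sum_weighted P X (fun a => Real.log (rvDist P X a))]

lemma rvDist_comp {Ω α β : Type*} [Fintype Ω] [DecidableEq α] [DecidableEq β]
    (P : Ω → ℝ) (X : Ω → α) (g : α → β) (hg : Function.Injective g) (ω0 : Ω) :
    rvDist P (fun ω => g (X ω)) (g (X ω0)) = rvDist P X (X ω0) := by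
  unfold rvDist
  apply Finset.sum_congr rfl
  intro ω _
  simp [hg.eq_iff]

lemma rvEntropy_comp {Ω α β : Type*} [Fintype Ω] [Fintype α] [Fintype β]
    [DecidableEq α] [DecidableEq β]
    (P : Ω → ℝ) (X : Ω → α) (g : α → β) (hg : Function.Injective g) :
    rvEntropy P (fun ω => g (X ω)) = rvEntropy P X := by
  rw [rvEntropy_eq, rvEntropy_eq]
  congr 1
  apply Finset.sum_congr rfl
  intro ω _
  rw [rvDist_comp P X g hg ω]

lemma rvEntropy_pair_le {Ω α β : Type*} [Fintype Ω] [Fintype α] [Fintype β]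
    [DecidableEq α] [DecidableEq β]
    (P : Ω → ℝ) (hP : ∀ ω, 0 ≤ P ω) (hP1 : ∑ ω : Ω, P ω = 1)
    (X : Ω → α) (Y : Ω → β) :
    rvEntropy P (fun ω => (X ω, Y ω)) ≤ rvEntropy P X + rvEntropy P Y := by
  set pX := rvDist P X with hpX
  set pY := rvDist P Y with hpY
  set pXY := rvDist P (fun ω => (X ω, Y ω)) with hpXY
  have key : ∑ ω : Ω, (P ω * Real.log (pX (X ω)) + P ω * Real.log (pY (Y ω))
      - P ω * Real.log (pXY (X ω, Y ω))) ≤ 0 := by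
    have hterm : ∀ ω : Ω, P ω * Real.log (pX (X ω)) + P ω * Real.log (pY (Y ω))
        - P ω * Real.log (pXY (X ω, Y ω))
        ≤ P ω * (pX (X ω) * pY (Y ω) / pXY (X ω, Y ω)) - P ω := by
      intro ω
      rcases eq_or_lt_of_le (hP ω) with h0 | h0
      · simp [← h0]
      · have hx : 0 < pX (X ω) := lt_of_lt_of_le h0 (le_rvDist P hP X ω)
        have hy : 0 < pY (Y ω) := lt_of_lt_of_le h0 (le_rvDist P hP Y ω)
        have hxy : 0 < pXY (X ω, Y ω) := lt_of_lt_of_le h0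
          (le_rvDist P hP (fun ω => (X ω, Y ω)) ω)
        have hlog : Real.log (pX (X ω)) + Real.log (pY (Y ω))
            - Real.log (pXY (X ω, Y ω))
            = Real.log (pX (X ω) * pY (Y ω) / pXY (X ω, Y ω)) := by
          rw [Real.log_div (by positivity) (ne_of_gt hxy),
            Real.log_mul (ne_of_gt hx) (ne_of_gt hy)]
        have hpos : 0 < pX (X ω) * pY (Y ω) / pXY (X ω, Y ω) := by positivity
        have := Real.log_le_sub_one_of_pos hpos
        calc P ω * Real.log (pX (X ω)) + P ω * Real.log (pY (Y ω))
            - P ω * Real.log (pXY (X ω, Y ω))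
            = P ω * (Real.log (pX (X ω)) + Real.log (pY (Y ω))
              - Real.log (pXY (X ω, Y ω))) := by ring
          _ = P ω * Real.log (pX (X ω) * pY (Y ω) / pXY (X ω, Y ω)) := by rw [hlog]
          _ ≤ P ω * (pX (X ω) * pY (Y ω) / pXY (X ω, Y ω) - 1) :=
              mul_le_mul_of_nonneg_left this (le_of_lt h0)
          _ = P ω * (pX (X ω) * pY (Y ω) / pXY (X ω, Y ω)) - P ω := by ring
    calc ∑ ω : Ω, (P ω * Real.log (pX (X ω)) + P ω * Real.log (pY (Y ω))
          - P ω * Real.log (pXY (X ω, Y ω)))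
        ≤ ∑ ω : Ω, (P ω * (pX (X ω) * pY (Y ω) / pXY (X ω, Y ω)) - P ω) :=
          Finset.sum_le_sum fun ω _ => hterm ω
      _ = (∑ ω : Ω, P ω * (pX (X ω) * pY (Y ω) / pXY (X ω, Y ω))) - 1 := by
          rw [Finset.sum_sub_distrib, hP1]
      _ = (∑ c : α × β, pXY c * (pX c.1 * pY c.2 / pXY c)) - 1 := by
          rw [sum_weighted P (fun ω => (X ω, Y ω))
            (fun c => pX c.1 * pY c.2 / pXY c)]
      _ ≤ (∑ c : α × β, pX c.1 * pY c.2) - 1 := by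
          apply sub_le_sub_right
          apply Finset.sum_le_sum
          intro c _
          rcases eq_or_ne (pXY c) 0 with h | h
          · rw [h, zero_mul]
            exact mul_nonneg (rvDist_nonneg P hP X c.1) (rvDist_nonneg P hP Y c.2)
          · rw [mul_div_cancel₀ _ h]
      _ = 0 := by
          rw [Fintype.sum_prod_type]
          simp only [← Finset.sum_mul, ← Finset.mul_sum]
          rw [rvDist_sum_one P hP1 X, rvDist_sum_one P hP1 Y]
          norm_num
  rw [rvEntropy_eq P X, rvEntropy_eq P Y, rvEntropy_eq P (fun ω => (X ω, Y ω))]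
  rw [Finset.sum_sub_distrib, Finset.sum_add_distrib] at key
  linarith

lemma rvEntropy_indep3 {Ω σ1 σ2 σ3 : Type*} [Fintype Ω] [Fintype σ1] [Fintype σ2]
    [Fintype σ3] [DecidableEq σ1] [DecidableEq σ2] [DecidableEq σ3]
    (P : Ω → ℝ) (hP : ∀ ω, 0 ≤ P ω)
    (Y1 : Ω → σ1) (Y2 : Ω → σ2) (Y3 : Ω → σ3)
    (hInd : ∀ (y1 : σ1) (y2 : σ2) (y3 : σ3),
      rvDist P (fun ω => (Y1 ω, Y2 ω, Y3 ω)) (y1, y2, y3)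
        = rvDist P Y1 y1 * rvDist P Y2 y2 * rvDist P Y3 y3) :
    rvEntropy P (fun ω => (Y1 ω, Y2 ω, Y3 ω))
      = rvEntropy P Y1 + rvEntropy P Y2 + rvEntropy P Y3 := by
  rw [rvEntropy_eq, rvEntropy_eq, rvEntropy_eq, rvEntropy_eq]
  have : ∀ ω : Ω, P ω * Real.log
      (rvDist P (fun ω => (Y1 ω, Y2 ω, Y3 ω)) (Y1 ω, Y2 ω, Y3 ω))
      = P ω * Real.log (rvDist P Y1 (Y1 ω)) + P ω * Real.log (rvDist P Y2 (Y2 ω))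
        + P ω * Real.log (rvDist P Y3 (Y3 ω)) := by
    intro ω
    rcases eq_or_lt_of_le (hP ω) with h0 | h0
    · simp [← h0]
    · have hprod : 0 < rvDist P (fun ω => (Y1 ω, Y2 ω, Y3 ω)) (Y1 ω, Y2 ω, Y3 ω) :=
        lt_of_lt_of_le h0 (le_rvDist P hP (fun ω => (Y1 ω, Y2 ω, Y3 ω)) ω)
      rw [hInd (Y1 ω) (Y2 ω) (Y3 ω)] at hprod ⊢
      have h1 : rvDist P Y1 (Y1 ω) ≠ 0 := by
        intro h; rw [h] at hprod; simp at hprod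
      have h2 : rvDist P Y2 (Y2 ω) ≠ 0 := by
        intro h; rw [h] at hprod; simp at hprod
      have h3 : rvDist P Y3 (Y3 ω) ≠ 0 := by
        intro h; rw [h] at hprod; simp at hprod
      rw [Real.log_mul (mul_ne_zero h1 h2) h3, Real.log_mul h1 h2]
      ring
  simp only [this, Finset.sum_add_distrib]
  ring

/-- If `Y₁, Y₂, Y₃` are mutually independent finitely-valued random
variables, then `I(Y₁ ; Y₂ | X, Y₃) ≤ I((Y₁, Y₂, Y₃) ; X)`. -/
theorem stmt14 {Ω σX σ1 σ2 σ3 : Type*} [Fintype Ω] [Fintype σX] [Fintype σ1]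
    [Fintype σ2] [Fintype σ3] [DecidableEq σX] [DecidableEq σ1] [DecidableEq σ2]
    [DecidableEq σ3]
    (P : Ω → ℝ) (hP : ∀ ω, 0 ≤ P ω) (hP1 : ∑ ω : Ω, P ω = 1)
    (X : Ω → σX) (Y1 : Ω → σ1) (Y2 : Ω → σ2) (Y3 : Ω → σ3)
    (hInd : ∀ (y1 : σ1) (y2 : σ2) (y3 : σ3),
      rvDist P (fun ω => (Y1 ω, Y2 ω, Y3 ω)) (y1, y2, y3)
        = rvDist P Y1 y1 * rvDist P Y2 y2 * rvDist P Y3 y3) :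
    rvCondMutualInfo P Y1 Y2 (fun ω => (X ω, Y3 ω))
      ≤ rvMutualInfo P (fun ω => (Y1 ω, Y2 ω, Y3 ω)) X := by
  simp only [rvCondMutualInfo, rvCondEntropy, rvMutualInfo]
  have h1 : rvEntropy P (fun ω => (Y1 ω, (X ω, Y3 ω)))
      ≤ rvEntropy P Y1 + rvEntropy P (fun ω => (X ω, Y3 ω)) :=
    rvEntropy_pair_le P hP hP1 Y1 (fun ω => (X ω, Y3 ω))
  have h2 : rvEntropy P (fun ω => (Y2 ω, (X ω, Y3 ω)))
      ≤ rvEntropy P Y2 + rvEntropy P (fun ω => (X ω, Y3 ω)) :=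
    rvEntropy_pair_le P hP hP1 Y2 (fun ω => (X ω, Y3 ω))
  have h3 : rvEntropy P (fun ω => (X ω, Y3 ω))
      ≤ rvEntropy P X + rvEntropy P Y3 :=
    rvEntropy_pair_le P hP hP1 X Y3
  have h5 := rvEntropy_indep3 P hP Y1 Y2 Y3 hInd
  have h4 : rvEntropy P (fun ω => ((Y1 ω, Y2 ω), (X ω, Y3 ω)))
      = rvEntropy P (fun ω => ((Y1 ω, Y2 ω, Y3 ω), X ω)) := by
    have hg : Function.Injective
        (fun p : (σ1 × σ2 × σ3) × σX => ((p.1.1, p.1.2.1), (p.2, p.1.2.2))) := by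
      intro a b h
      simp only [Prod.mk.injEq] at h
      obtain ⟨⟨h1, h2⟩, h3, h4⟩ := h
      exact Prod.ext (Prod.ext h1 (Prod.ext h2 h4)) h3
    exact rvEntropy_comp P (fun ω => ((Y1 ω, Y2 ω, Y3 ω), X ω))
      (fun p : (σ1 × σ2 × σ3) × σX => ((p.1.1, p.1.2.1), (p.2, p.1.2.2))) hg
  linarith
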